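/- Let S be a finite nonempty set and ξ, ζ : S → ℍ. Then |Σ_{x∈S} ξ_x − Σ_{x∈S} ζ_x|² = Σ_{x∈S} Im ζ_x · (Σ_{y∈S} Im ξ_y · cos α_{x,y} · Q_{x,y}) · γ(ξ_x, ζ_x), where cos α_{x,y} and Q_{x,y} are formed from the pair of families g = ξ and h = ζ. -/

import Mathlib

/-- The hyperbolic semi-metric `γ(g,h) = |g-h|² / (Im g · Im h)` on the upper half plane. -/
noncomputable def gam (g h : ℂ) : ℝ := ‖g - h‖ ^ 2 / (g.im * h.im)

/-- `cos α_{x,y}` formed from the values `g_x, h_x, g_y, h_y`. -/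
noncomputable def cosAlpha (gx hx gy hy : ℂ) : ℝ :=
  if gx ≠ hx ∧ gy ≠ hy then
    ((gx - hx) * (starRingEnd ℂ) (gy - hy)).re /
      (‖gx - hx‖ * ‖gy - hy‖)
  else 0

/-- `Q_{x,y}` formed from the values `g_x, h_x, g_y, h_y`. -/
noncomputable def Qquot (gx hx gy hy : ℂ) : ℝ :=
  if gx ≠ hx ∧ gy ≠ hy then
    Real.sqrt (gx.im * gy.im * hx.im * hy.im * gam gx hx * gam gy hy) /
      ((1 / 2) * (gx.im * hy.im * gam gy hy + gy.im * hx.im * gam gx hx))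
  else 0

lemma key_pointwise (gx hx gy hy : ℂ) (ha : 0 < gx.im) (hb : 0 < hx.im) (hc : 0 < gy.im)
    (he : 0 < hy.im) :
    hx.im * ((gy.im * cosAlpha gx hx gy hy * Qquot gx hx gy hy) * gam gx hx)
      + hy.im * ((gx.im * cosAlpha gy hy gx hx * Qquot gy hy gx hx) * gam gy hy)
    = 2 * ((gx - hx) * (starRingEnd ℂ) (gy - hy)).re := by
  by_cases h1 : gx = hx
  · subst h1; simp [cosAlpha, Qquot]
  by_cases h2 : gy = hy
  · subst h2; simp [cosAlpha, Qquot]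
  have hP : ‖gx - hx‖ ≠ 0 := by simpa [sub_eq_zero] using h1
  have hQ : ‖gy - hy‖ ≠ 0 := by simpa [sub_eq_zero] using h2
  have hPpos : 0 < ‖gx - hx‖ := (norm_nonneg _).lt_of_ne (Ne.symm hP)
  have hQpos : 0 < ‖gy - hy‖ := (norm_nonneg _).lt_of_ne (Ne.symm hQ)
  have hgamx : gam gx hx = ‖gx - hx‖ ^ 2 / (gx.im * hx.im) := rfl
  have hgamy : gam gy hy = ‖gy - hy‖ ^ 2 / (gy.im * hy.im) := rfl
  have hsq : gx.im * gy.im * hx.im * hy.im * gam gx hx * gam gy hy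
      = (‖gx - hx‖ * ‖gy - hy‖) ^ 2 := by
    rw [hgamx, hgamy]; field_simp
  have hsq' : gy.im * gx.im * hy.im * hx.im * gam gy hy * gam gx hx
      = (‖gx - hx‖ * ‖gy - hy‖) ^ 2 := by
    rw [hgamx, hgamy]; field_simp
  have hR : ((gy - hy) * (starRingEnd ℂ) (gx - hx)).re
      = ((gx - hx) * (starRingEnd ℂ) (gy - hy)).re := by
    simp [Complex.mul_re]; ring
  have hD : 0 < (1 / 2 : ℝ) * (gx.im * hy.im * gam gy hy + gy.im * hx.im * gam gx hx) := by
    rw [hgamx, hgamy]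
    have := pow_pos hPpos 2
    have := pow_pos hQpos 2
    positivity
  rw [cosAlpha, Qquot, cosAlpha, Qquot, if_pos ⟨h1, h2⟩, if_pos ⟨h1, h2⟩,
    if_pos ⟨h2, h1⟩, if_pos ⟨h2, h1⟩, hsq, hsq', hR,
    Real.sqrt_sq (by positivity)]
  rw [hgamx, hgamy] at hD ⊢
  field_simp
  ring

theorem sum_difference_expansion
    {S : Type*} [Fintype S] [Nonempty S]
    (ξ ζ : S → ℂ) (hξ : ∀ x, 0 < (ξ x).im) (hζ : ∀ x, 0 < (ζ x).im) :
    ‖∑ x, ξ x - ∑ x, ζ x‖ ^ 2 =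
      ∑ x, (ζ x).im *
        (∑ y, (ξ y).im * cosAlpha (ξ x) (ζ x) (ξ y) (ζ y) * Qquot (ξ x) (ζ x) (ξ y) (ζ y)) *
          gam (ξ x) (ζ x) := by
  set F : S → S → ℝ := fun x y =>
    (ζ x).im * (((ξ y).im * cosAlpha (ξ x) (ζ x) (ξ y) (ζ y) *
      Qquot (ξ x) (ζ x) (ξ y) (ζ y)) * gam (ξ x) (ζ x)) with hF
  have hRHS : (∑ x, (ζ x).im *
        (∑ y, (ξ y).im * cosAlpha (ξ x) (ζ x) (ξ y) (ζ y) * Qquot (ξ x) (ζ x) (ξ y) (ζ y)) *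
          gam (ξ x) (ζ x)) = ∑ x, ∑ y, F x y := by
    refine Finset.sum_congr rfl fun x _ => ?_
    rw [Finset.mul_sum, Finset.sum_mul]
    refine Finset.sum_congr rfl fun y _ => ?_
    simp only [hF]; ring
  have hLHS : ‖∑ x, ξ x - ∑ x, ζ x‖ ^ 2
      = ∑ x, ∑ y, ((ξ x - ζ x) * (starRingEnd ℂ) (ξ y - ζ y)).re := by
    rw [← Finset.sum_sub_distrib, Complex.sq_norm]
    have h1 : (Complex.normSq (∑ x, (ξ x - ζ x)))
        = ((∑ x, (ξ x - ζ x)) * (starRingEnd ℂ) (∑ x, (ξ x - ζ x))).re := by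
      rw [Complex.mul_conj]; simp
    rw [h1, map_sum, Finset.sum_mul_sum]
    simp [Complex.re_sum]
  rw [hLHS, hRHS]
  have hkey : ∀ x y : S, F x y + F y x
      = 2 * ((ξ x - ζ x) * (starRingEnd ℂ) (ξ y - ζ y)).re := by
    intro x y
    simpa [hF, mul_comm, mul_assoc, mul_left_comm] using
      key_pointwise (ξ x) (ζ x) (ξ y) (ζ y) (hξ x) (hζ x) (hξ y) (hζ y)
  have h2 : (∑ x, ∑ y, F x y) + (∑ x, ∑ y, F y x)
      = ∑ x, ∑ y, 2 * ((ξ x - ζ x) * (starRingEnd ℂ) (ξ y - ζ y)).re := by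
    rw [← Finset.sum_add_distrib]
    refine Finset.sum_congr rfl fun x _ => ?_
    rw [← Finset.sum_add_distrib]
    exact Finset.sum_congr rfl fun y _ => hkey x y
  have hc : (∑ x, ∑ y, F y x) = ∑ x, ∑ y, F x y := Finset.sum_comm
  rw [hc] at h2
  have h3 : ∑ x, ∑ y, 2 * ((ξ x - ζ x) * (starRingEnd ℂ) (ξ y - ζ y)).re
      = 2 * ∑ x, ∑ y, ((ξ x - ζ x) * (starRingEnd ℂ) (ξ y - ζ y)).re := by
    rw [Finset.mul_sum]; exact Finset.sum_congr rfl fun x _ => by rw [Finset.mul_sum]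
  linarith [h2, h3]
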